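/- For the discrete Liouville equation, with Y_+ = (t-1)X_1 and Y_- = t X_{-1}, the u-shifted operators satisfy D(Y_+) = ((t_1-1)/t_1)(Y_+ - (t-1)\partial/\partial t) and D(Y_-) = (t_1/(t_1-1))(Y_- - t\,\partial/\partial t). -/

import Mathlib

open Finset

/-- The `u`-shift acting on functions of the dynamical variables `t₀, t₁, t₂, …`. -/
noncomputable def uShift (F : (ℕ → ℝ) → ℝ) : (ℕ → ℝ) → ℝ := fun t => F (fun k => t (k+1))

/-- Coefficients of `X₁` for the discrete Liouville equation. -/
noncomputable def xplus (j : ℕ) : (ℕ → ℝ) → ℝ := fun t => ∏ k ∈ range j, t (k+1) / (t k - 1)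

/-- Coefficients of `X₋₁` for the discrete Liouville equation. -/
noncomputable def xminus (j : ℕ) : (ℕ → ℝ) → ℝ := fun t => ∏ k ∈ range j, (t (k+1) - 1) / t k

/-- Coefficients of `Y₊ = (t-1)X₁`. -/
noncomputable def Yplus (j : ℕ) : (ℕ → ℝ) → ℝ := fun t => (t 0 - 1) * xplus j t

/-- Coefficients of `Y₋ = t X₋₁`. -/
noncomputable def Yminus (j : ℕ) : (ℕ → ℝ) → ℝ := fun t => t 0 * xminus j t

/-- Pushforward of a vector field `Σ cⱼ ∂/∂tⱼ` under the `u`-shift `D`: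
`D(X) = Σ D(cⱼ) ∂/∂t_{j+1}`. -/
noncomputable def pushD (c : ℕ → (ℕ → ℝ) → ℝ) : ℕ → (ℕ → ℝ) → ℝ :=
  fun j => match j with
  | 0 => fun _ => 0
  | j + 1 => uShift (c j)

/-- For the discrete Liouville equation, with `Y₊ = (t-1)X₁` and `Y₋ = tX₋₁`:
`D(Y₊) = ((t₁-1)/t₁)(Y₊ - (t-1)∂/∂t)` and `D(Y₋) = (t₁/(t₁-1))(Y₋ - t ∂/∂t)`
(the coefficient sequence of `∂/∂t` is `δ_{j,0}`). -/
theorem stmt10 :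
    ∀ t : ℕ → ℝ, (∀ k, t k ≠ 0 ∧ t k ≠ 1) → ∀ j : ℕ,
      pushD Yplus j t
        = ((t 1 - 1) / t 1) * (Yplus j t - (t 0 - 1) * (if j = 0 then 1 else 0)) ∧
      pushD Yminus j t
        = (t 1 / (t 1 - 1)) * (Yminus j t - t 0 * (if j = 0 then 1 else 0)) := by
  intro t ht j
  have h0 : t 0 ≠ 0 := (ht 0).1
  have h01 : t 0 - 1 ≠ 0 := sub_ne_zero.mpr (ht 0).2
  have h1 : t 1 ≠ 0 := (ht 1).1
  have h11 : t 1 - 1 ≠ 0 := sub_ne_zero.mpr (ht 1).2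
  cases j with
  | zero =>
    simp only [pushD, Yplus, Yminus, xplus, xminus, range_zero, prod_empty,
      eq_self_iff_true, if_true, mul_one, sub_self, mul_zero]
    exact ⟨trivial, trivial⟩
  | succ j =>
    constructor
    · show uShift (Yplus j) t = _
      simp only [uShift, Yplus, xplus, Nat.succ_ne_zero, if_false, mul_zero, sub_zero]
      rw [Finset.prod_range_succ']
      set P : ℝ := ∏ k ∈ range j, t (k + 1 + 1) / (t (k + 1) - 1) with hP
      field_simp
    · show uShift (Yminus j) t = _
      simp only [uShift, Yminus, xminus, Nat.succ_ne_zero, if_false, mul_zero, sub_zero]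
      rw [Finset.prod_range_succ']
      set P : ℝ := ∏ k ∈ range j, (t (k + 1 + 1) - 1) / t (k + 1) with hP
      field_simp
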